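/- Let g ≥ 1 and g' ≥ 1. The action of the product group Sp(2g, ℤ) × Sp(2g', ℤ) on the tensor product ℂ^{2g} ⊗_ℂ ℂ^{2g'}, where (M, N) acts as the tensor product of the ℂ-linear maps given by the complexifications of M and N, is irreducible: every ℂ-linear subspace of ℂ^{2g} ⊗_ℂ ℂ^{2g'} that is invariant under the map induced by M ⊗ N for all M ∈ Sp(2g, ℤ) and all N ∈ Sp(2g', ℤ) is either 0 or the whole space ℂ^{2g} ⊗_ℂ ℂ^{2g'}. -/

import Mathlib

open Matrix

set_option linter.unusedSectionVars false
set_option maxHeartbeats 1000000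

namespace SympTensorAux
variable {m : Type*} [Fintype m] [DecidableEq m]

theorem vmv_mul (v w : m → ℤ) (M : Matrix m m ℤ) :
    vecMulVec v w * M = vecMulVec v (Mᵀ *ᵥ w) := by
  ext i j
  simp only [vecMulVec_apply, mul_apply, mulVec, dotProduct, transpose_apply, Finset.mul_sum]
  exact Finset.sum_congr rfl fun x _ => by ring

theorem mul_vmv (v w : m → ℤ) (M : Matrix m m ℤ) :
    M * vecMulVec v w = vecMulVec (M *ᵥ v) w := by
  ext i j
  simp only [vecMulVec_apply, mul_apply, mulVec, dotProduct, Finset.sum_mul]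
  exact Finset.sum_congr rfl fun x _ => by ring

theorem vmv_vmv (a b c d : m → ℤ) :
    vecMulVec a b * vecMulVec c d = (b ⬝ᵥ c) • vecMulVec a d := by
  ext i j
  simp only [vecMulVec_apply, mul_apply, Matrix.smul_apply, dotProduct, smul_eq_mul, Finset.sum_mul]
  exact Finset.sum_congr rfl fun x _ => by ring

theorem vmv_transpose (v w : m → ℤ) : (vecMulVec v w)ᵀ = vecMulVec w v := by
  ext i j; simp [vecMulVec_apply, mul_comm]

theorem vmv_neg_right (v w : m → ℤ) : vecMulVec v (-w) = -vecMulVec v w := by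
  ext i j; simp [vecMulVec_apply]

variable (J : Matrix m m ℤ)

theorem Jskew_mulVec (hJ : Jᵀ = -J) (v : m → ℤ) : v ᵥ* J = -(J *ᵥ v) := by
  rw [← mulVec_transpose, hJ, neg_mulVec]

theorem JJ_mulVec (hJ2 : J * J = -1) (x : m → ℤ) : J *ᵥ (J *ᵥ x) = -x := by
  rw [mulVec_mulVec, hJ2, neg_mulVec, one_mulVec]

theorem pair_J (hJ : Jᵀ = -J) (hJ2 : J * J = -1) (x y : m → ℤ) :
    (J *ᵥ x) ⬝ᵥ (J *ᵥ y) = x ⬝ᵥ y := by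
  rw [dotProduct_mulVec, Jskew_mulVec J hJ, JJ_mulVec J hJ2, neg_neg]

theorem self_pair (hJ : Jᵀ = -J) (v : m → ℤ) : (J *ᵥ v) ⬝ᵥ v = 0 := by
  have h : (J *ᵥ v) ⬝ᵥ v = v ⬝ᵥ (J *ᵥ v) := dotProduct_comm _ _
  rw [dotProduct_mulVec, Jskew_mulVec J hJ, neg_dotProduct] at h
  linarith

theorem self_pair' (hJ : Jᵀ = -J) (v : m → ℤ) : v ⬝ᵥ (J *ᵥ v) = 0 := by
  rw [← dotProduct_comm]; exact self_pair J hJ v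

theorem transvection_symplectic (hJ : Jᵀ = -J) (v : m → ℤ) :
    (1 + vecMulVec v (J *ᵥ v))ᵀ * J * (1 + vecMulVec v (J *ᵥ v)) = J := by
  set w := J *ᵥ v with hw
  have h1 : vecMulVec w v * J = -(vecMulVec w w) := by
    rw [vmv_mul, hJ, neg_mulVec, ← hw, vmv_neg_right]
  have h2 : J * vecMulVec v w = vecMulVec w w := by rw [mul_vmv, ← hw]
  have h4 : vecMulVec w w * vecMulVec v w = 0 := by
    rw [vmv_vmv, self_pair J hJ v, zero_smul]
  rw [transpose_add, transpose_one, vmv_transpose]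
  rw [add_mul, one_mul, add_mul, mul_add, mul_add, mul_one, mul_one, h1, h2, neg_mul, h4, neg_zero]
  abel

theorem triple_prod (u v w : m → ℤ) :
    vecMulVec u (J *ᵥ u) * vecMulVec v (J *ᵥ v) * vecMulVec w (J *ᵥ w)
      = (((J *ᵥ u) ⬝ᵥ v) * ((J *ᵥ v) ⬝ᵥ w)) • vecMulVec u (J *ᵥ w) := by
  rw [vmv_vmv, Matrix.smul_mul, vmv_vmv, smul_smul]

theorem cube_ne (t : ℤ) : t ^ 3 + t + 1 ≠ 0 := by
  rcases le_or_gt t (-1) with h | h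
  · nlinarith [sq_nonneg t, sq_nonneg (t + 1)]
  · have : 0 ≤ t := by omega
    nlinarith [sq_nonneg t]

theorem quad_ne (t : ℤ) : t ^ 2 + t + 1 ≠ 0 := by nlinarith [sq_nonneg (2 * t + 1)]

theorem exists_triple (hJ : Jᵀ = -J) (hJ2 : J * J = -1) (a b : m) :
    ∃ (u v w : m → ℤ) (c : ℤ), c ≠ 0 ∧
      vecMulVec u (J *ᵥ u) * vecMulVec v (J *ᵥ v) * vecMulVec w (J *ᵥ w)
        = c • vecMulVec (Pi.single a 1) (Pi.single b 1) := by
  set t : ℤ := J a b with ht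
  set ε : ℤ := t ^ 2 + 1 with hε
  refine ⟨Pi.single a 1, Pi.single b 1 - ε • (J *ᵥ Pi.single a 1), -(J *ᵥ Pi.single b 1),
    (-t - ε) * (-(1 + ε * t)), ?_, ?_⟩
  · have h1 : -t - ε = -(t ^ 2 + t + 1) := by ring
    have h2 : -(1 + ε * t) = -(t ^ 3 + t + 1) := by ring
    rw [h1, h2]
    simp only [neg_mul_neg, mul_ne_zero_iff]
    exact ⟨quad_ne t, cube_ne t⟩
  · rw [triple_prod]
    have hw : J *ᵥ (-(J *ᵥ Pi.single b 1)) = Pi.single b 1 := by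
      rw [mulVec_neg, JJ_mulVec J hJ2, neg_neg]
    rw [hw]
    have hba : J b a = -t := by
      have := congrFun (congrFun hJ a) b
      simpa using this
    have c1 : (J *ᵥ Pi.single a 1) ⬝ᵥ (Pi.single b 1 - ε • (J *ᵥ Pi.single a 1)) = -t - ε := by
      rw [dotProduct_sub, dotProduct_single, dotProduct_smul, pair_J J hJ hJ2,
        single_dotProduct, mulVec_single]
      simp [hba]
    have c2 : (J *ᵥ (Pi.single b 1 - ε • (J *ᵥ Pi.single a 1))) ⬝ᵥ (-(J *ᵥ Pi.single b 1))
        = -(1 + ε * t) := by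
      rw [dotProduct_neg, pair_J J hJ hJ2, sub_dotProduct, single_dotProduct, smul_dotProduct,
        dotProduct_single, mulVec_single]
      simp [hba]
    rw [c1, c2]

/-! ### casting to ℂ -/

theorem map_cast_add (A B : Matrix m m ℤ) :
    (A + B).map (Int.cast : ℤ → ℂ) = A.map Int.cast + B.map Int.cast := by
  ext i j; simp

theorem map_cast_one :
    (1 : Matrix m m ℤ).map (Int.cast : ℤ → ℂ) = 1 := by
  ext i j; simp [Matrix.map_apply, Matrix.one_apply, apply_ite (Int.cast : ℤ → ℂ)]

theorem map_cast_mul (A B : Matrix m m ℤ) :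
    (A * B).map (Int.cast : ℤ → ℂ) = A.map Int.cast * B.map Int.cast := by
  ext i j; simp [Matrix.map_apply, mul_apply]

theorem map_cast_smul (c : ℤ) (A : Matrix m m ℤ) :
    (c • A).map (Int.cast : ℤ → ℂ) = (c : ℂ) • A.map Int.cast := by
  ext i j
  simp only [Matrix.map_apply, Matrix.smul_apply, smul_eq_mul, Int.cast_mul, Complex.coe_smul]

theorem map_cast_vmv (v w : m → ℤ) :
    (vecMulVec v w).map (Int.cast : ℤ → ℂ)
      = vecMulVec (fun i => ((v i : ℤ) : ℂ)) (fun i => ((w i : ℤ) : ℂ)) := by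
  ext i j; simp [Matrix.map_apply, vecMulVec_apply]

theorem cast_single (a : m) :
    (fun i => (((Pi.single a 1 : m → ℤ) i : ℤ) : ℂ)) = Pi.single a (1 : ℂ) := by
  ext i; simp [Pi.single_apply, apply_ite (Int.cast : ℤ → ℂ)]

theorem vmv_mulVec (v w x : m → ℂ) : vecMulVec v w *ᵥ x = (w ⬝ᵥ x) • v := by
  ext i
  simp only [mulVec, vecMulVec_apply, dotProduct, Pi.smul_apply, smul_eq_mul, Finset.sum_mul]
  exact Finset.sum_congr rfl fun x _ => by ring

theorem mulVecLin_smulc (c : ℂ) (A : Matrix m m ℂ) :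
    (c • A).mulVecLin = c • A.mulVecLin := by
  ext x i
  simp [mulVecLin, smul_mulVec]


end SympTensorAux

open SympTensorAux in
theorem main_aux {m m' : Type*} [Fintype m] [DecidableEq m] [Fintype m'] [DecidableEq m']
    (J : Matrix m m ℤ) (J' : Matrix m' m' ℤ)
    (hJ : Jᵀ = -J) (hJ2 : J * J = -1) (hJ' : J'ᵀ = -J') (hJ2' : J' * J' = -1)
    (U : Submodule ℂ (TensorProduct ℂ (m → ℂ) (m' → ℂ)))
    (hU : ∀ (M : Matrix m m ℤ) (N : Matrix m' m' ℤ),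
      Mᵀ * J * M = J → Nᵀ * J' * N = J' →
      ∀ x ∈ U, TensorProduct.map (M.map (Int.cast : ℤ → ℂ)).mulVecLin
        (N.map (Int.cast : ℤ → ℂ)).mulVecLin x ∈ U) :
    U = ⊥ ∨ U = ⊤ := by
  -- Step 1 : invariance under rank one symplectic pieces
  have step1 : ∀ (v : m → ℤ) (w : m' → ℤ), ∀ x ∈ U,
      TensorProduct.map ((vecMulVec v (J *ᵥ v)).map (Int.cast : ℤ → ℂ)).mulVecLin
        ((vecMulVec w (J' *ᵥ w)).map (Int.cast : ℤ → ℂ)).mulVecLin x ∈ U := by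
    intro v w x hx
    set f := ((vecMulVec v (J *ᵥ v)).map (Int.cast : ℤ → ℂ)).mulVecLin with hf
    set g := ((vecMulVec w (J' *ᵥ w)).map (Int.cast : ℤ → ℂ)).mulVecLin with hg
    have e1 : ((1 + vecMulVec v (J *ᵥ v)).map (Int.cast : ℤ → ℂ)).mulVecLin
        = LinearMap.id + f := by
      rw [map_cast_add, map_cast_one, mulVecLin_add, mulVecLin_one, hf]
    have e2 : ((1 + vecMulVec w (J' *ᵥ w)).map (Int.cast : ℤ → ℂ)).mulVecLin
        = LinearMap.id + g := by
      rw [map_cast_add, map_cast_one, mulVecLin_add, mulVecLin_one, hg]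
    have e3 : ((1 : Matrix m m ℤ).map (Int.cast : ℤ → ℂ)).mulVecLin
        = (LinearMap.id : (m → ℂ) →ₗ[ℂ] (m → ℂ)) := by
      rw [map_cast_one, mulVecLin_one]
    have e4 : ((1 : Matrix m' m' ℤ).map (Int.cast : ℤ → ℂ)).mulVecLin
        = (LinearMap.id : (m' → ℂ) →ₗ[ℂ] (m' → ℂ)) := by
      rw [map_cast_one, mulVecLin_one]
    have hI : (1 : Matrix m m ℤ)ᵀ * J * 1 = J := by simp
    have hI' : (1 : Matrix m' m' ℤ)ᵀ * J' * 1 = J' := by simp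
    have h1 := hU _ _ (transvection_symplectic J hJ v) (transvection_symplectic J' hJ' w) x hx
    have h2 := hU _ _ (transvection_symplectic J hJ v) hI' x hx
    have h3 := hU _ _ hI (transvection_symplectic J' hJ' w) x hx
    rw [e1, e2] at h1
    rw [e1, e4] at h2
    rw [e3, e2] at h3
    have key : TensorProduct.map f g
        = TensorProduct.map (LinearMap.id + f) (LinearMap.id + g)
          - TensorProduct.map (LinearMap.id + f) LinearMap.id
          - TensorProduct.map LinearMap.id (LinearMap.id + g)
          + TensorProduct.map LinearMap.id LinearMap.id := by
      simp only [TensorProduct.map_add_left, TensorProduct.map_add_right]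
      abel
    rw [key]
    simp only [LinearMap.add_apply, LinearMap.sub_apply, TensorProduct.map_id, LinearMap.id_apply]
    exact U.add_mem (U.sub_mem (U.sub_mem h1 h2) h3) hx
  -- Step 2 : invariance under triple products
  have step2 : ∀ (u v w : m → ℤ) (u' v' w' : m' → ℤ), ∀ x ∈ U,
      TensorProduct.map
        (((vecMulVec u (J *ᵥ u) * vecMulVec v (J *ᵥ v) * vecMulVec w (J *ᵥ w))).map
          (Int.cast : ℤ → ℂ)).mulVecLin
        (((vecMulVec u' (J' *ᵥ u') * vecMulVec v' (J' *ᵥ v') * vecMulVec w' (J' *ᵥ w'))).map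
          (Int.cast : ℤ → ℂ)).mulVecLin x ∈ U := by
    intro u v w u' v' w' x hx
    rw [map_cast_mul, map_cast_mul, map_cast_mul, map_cast_mul,
      mulVecLin_mul, mulVecLin_mul, mulVecLin_mul, mulVecLin_mul,
      TensorProduct.map_comp, TensorProduct.map_comp]
    exact step1 u u' _ (step1 v v' _ (step1 w w' x hx))
  -- Step 3 : invariance under elementary matrix tensors (over ℂ)
  have step3 : ∀ (a b : m) (a' b' : m'), ∀ x ∈ U,
      TensorProduct.map
        (vecMulVec (Pi.single a (1:ℂ)) (Pi.single b 1)).mulVecLin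
        (vecMulVec (Pi.single a' (1:ℂ)) (Pi.single b' 1)).mulVecLin x ∈ U := by
    intro a b a' b' x hx
    obtain ⟨u, v, w, c, hc, heq⟩ := exists_triple J hJ hJ2 a b
    obtain ⟨u', v', w', c', hc', heq'⟩ := exists_triple J' hJ' hJ2' a' b'
    have h := step2 u v w u' v' w' x hx
    rw [heq, heq', map_cast_smul, map_cast_smul, map_cast_vmv, map_cast_vmv,
      cast_single, cast_single, cast_single, cast_single,
      mulVecLin_smulc, mulVecLin_smulc, TensorProduct.map_smul_left,
      TensorProduct.map_smul_right, smul_smul, LinearMap.smul_apply] at h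
    have hcc : ((c : ℂ) * (c' : ℂ)) ≠ 0 := by
      simp only [ne_eq, mul_eq_zero, Int.cast_eq_zero]
      tauto
    have := U.smul_mem ((c : ℂ) * (c' : ℂ))⁻¹ h
    rwa [inv_smul_smul₀ hcc] at this
  -- Step 4 : conclude
  rcases eq_or_ne U ⊥ with h | h
  · exact Or.inl h
  right
  obtain ⟨x, hxU, hx0⟩ := Submodule.exists_mem_ne_zero_of_ne_bot h
  set B := (Pi.basisFun ℂ m).tensorProduct (Pi.basisFun ℂ m') with hB
  obtain ⟨⟨i, k⟩, hik⟩ : ∃ p, B.repr x p ≠ 0 := by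
    by_contra hall
    push_neg at hall
    exact hx0 (by
      have : B.repr x = 0 := Finsupp.ext fun p => hall p
      simpa using congrArg B.repr.symm this)
  have key : ∀ (a : m) (a' : m'),
      (Pi.single a (1:ℂ)) ⊗ₜ[ℂ] (Pi.single a' (1:ℂ)) ∈ U := by
    intro a a'
    have hL := step3 a i a' k x hxU
    have hop : TensorProduct.map (vecMulVec (Pi.single a (1:ℂ)) (Pi.single i 1)).mulVecLin
          (vecMulVec (Pi.single a' (1:ℂ)) (Pi.single k 1)).mulVecLin
        = LinearMap.smulRight (B.coord (i, k))
            (Pi.single a (1:ℂ) ⊗ₜ[ℂ] Pi.single a' (1:ℂ)) := by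
      apply B.ext
      rintro ⟨p, q⟩
      rw [hB, Module.Basis.tensorProduct_apply]
      simp only [Pi.basisFun_apply, TensorProduct.map_tmul, mulVecLin_apply, vmv_mulVec,
        LinearMap.smulRight_apply, Module.Basis.coord_apply]
      rw [Module.Basis.tensorProduct_repr_tmul_apply]
      simp only [Pi.basisFun_repr, single_dotProduct, one_mul, Pi.single_apply]
      rcases eq_or_ne i p with rfl | hip <;> rcases eq_or_ne k q with rfl | hkq <;>
        simp_all [eq_comm, TensorProduct.smul_tmul, TensorProduct.tmul_smul]
    rw [hop] at hL
    simp only [LinearMap.smulRight_apply, Module.Basis.coord_apply] at hL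
    have := U.smul_mem (B.repr x (i, k))⁻¹ hL
    rwa [inv_smul_smul₀ hik] at this
  rw [eq_top_iff, ← B.span_eq, Submodule.span_le]
  rintro y ⟨⟨a, a'⟩, rfl⟩
  rw [hB, Module.Basis.tensorProduct_apply]
  simp only [Pi.basisFun_apply]
  exact key a a'


/-- For `g ≥ 1` and `g' ≥ 1`, the action of `Sp(2g, ℤ) × Sp(2g', ℤ)` on
`ℂ^{2g} ⊗_ℂ ℂ^{2g'}`, where `(M, N)` acts as the tensor product of the `ℂ`-linear
maps given by the complexifications of `M` and `N`, is irreducible: every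
`ℂ`-subspace invariant under `M ⊗ N` for all integral symplectic `M`, `N`
(i.e. `Mᵀ * J * M = J` with `J = [[0, I], [-I, 0]]`, and similarly for `N`)
is `0` or the whole space. -/
theorem symplectic_tensor_monodromy_irreducible (g g' : ℕ) (hg : 1 ≤ g) (hg' : 1 ≤ g')
    (U : Submodule ℂ (TensorProduct ℂ ((Fin g ⊕ Fin g) → ℂ) ((Fin g' ⊕ Fin g') → ℂ)))
    (hU : ∀ (M : Matrix (Fin g ⊕ Fin g) (Fin g ⊕ Fin g) ℤ)
        (N : Matrix (Fin g' ⊕ Fin g') (Fin g' ⊕ Fin g') ℤ),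
      Mᵀ * Matrix.fromBlocks 0 1 (-1) 0 * M = Matrix.fromBlocks 0 1 (-1) 0 →
      Nᵀ * Matrix.fromBlocks 0 1 (-1) 0 * N = Matrix.fromBlocks 0 1 (-1) 0 →
      ∀ x ∈ U,
        TensorProduct.map ((M.map (Int.cast : ℤ → ℂ)).mulVecLin)
          ((N.map (Int.cast : ℤ → ℂ)).mulVecLin) x ∈ U) :
    U = ⊥ ∨ U = ⊤ := by
  have hT : ∀ (k : ℕ), ((Matrix.fromBlocks 0 1 (-1) 0 : Matrix (Fin k ⊕ Fin k) (Fin k ⊕ Fin k) ℤ))ᵀ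
      = -(Matrix.fromBlocks 0 1 (-1) 0) := by
    intro k
    rw [Matrix.fromBlocks_transpose, Matrix.fromBlocks_neg]
    simp
  have hM : ∀ (k : ℕ), (Matrix.fromBlocks 0 1 (-1) 0 : Matrix (Fin k ⊕ Fin k) (Fin k ⊕ Fin k) ℤ)
      * (Matrix.fromBlocks 0 1 (-1) 0) = -1 := by
    intro k
    rw [Matrix.fromBlocks_multiply, show (-1 : Matrix (Fin k ⊕ Fin k) (Fin k ⊕ Fin k) ℤ)
      = -(Matrix.fromBlocks 1 0 0 1) by rw [Matrix.fromBlocks_one], Matrix.fromBlocks_neg]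
    simp
  exact main_aux (Matrix.fromBlocks 0 1 (-1) 0) (Matrix.fromBlocks 0 1 (-1) 0)
    (hT g) (hM g) (hT g') (hM g') U hU
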